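/- Let F be a Fractran program and 𝒜_F the associated Fractran-type canonical collection. Every Fractran trajectory is reached: for any positive integer n, setting L = ⌈log_b(n+1)⌉ + 1, the trajectory in the canonical system of 𝒜_F starting from N = n · b^{L(L+1)/2} = n · ∏_{i=0}^{L-1} b_i attains the value n at step L, i.e. n_L = n where n_0 = N and n_{j+1} = f_j(n_j), and no trajectory value n_j with j < L hits the exceptional value b_j − 1. -/

import Mathlib

/-- One Fractran iteration: on input `n ≥ 1`, multiply by the first fraction in the
program giving an integer; return `0` if there is no such fraction (the program halts)
or if `n = 0`. -/
def fractranStep (F : List ℚ) (n : ℕ) : ℕ :=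
  if n = 0 then 0
  else
    match F.find? (fun q => ((n : ℚ) * q).den == 1) with
    | some q => ((n : ℚ) * q).num.toNat
    | none => 0

/-- The Fractran program `F` halts on input `n`. -/
def FractranHalts (F : List ℚ) (n : ℕ) : Prop :=
  ∃ k : ℕ, (fractranStep F)^[k] n = 0

/-- The base `b = 1 + ⌈max_k F_k⌉` of the Fractran-type canonical collection `𝒜_F`. -/
def bBase (F : List ℚ) : ℤ := 1 + (F.map fun q => ⌈q⌉).foldr max 0

/-- The bases of `𝒜_F`: `b_i = b^(i+1)`. -/
def bF (F : List ℚ) (i : ℕ) : ℤ := bBase F ^ (i + 1)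

/-- The digit maps of `𝒜_F` on `[0, b_i)`: `f_F` except at the exceptional value
`b_i - 1`, which is sent to `1`. -/
def digitF (F : List ℚ) (i : ℕ) (r : ℤ) : ℤ :=
  if r = bF F i - 1 then 1 else (fractranStep F r.toNat : ℤ)

/-- The residue sets of `𝒜_F`: `T_i = {r - b_i · f_i(r) : 0 ≤ r < b_i}`. -/
def TFr (F : List ℚ) (i : ℕ) : Set ℤ :=
  (fun r => r - bF F i * digitF F i r) '' Set.Ico 0 (bF F i)

/-- The canonical system maps of `𝒜_F`: `f_i(n) = (n - t_i(n)) / b_i`, where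
`t_i(n) = r - b_i · f_i(r)` with `r = n mod b_i ∈ [0, b_i)` is the unique element of
`T_i` congruent to `n` modulo `b_i`. -/
def fFr (F : List ℚ) (i : ℕ) (n : ℤ) : ℤ :=
  (n - Int.emod n (bF F i)) / bF F i + digitF F i (Int.emod n (bF F i))

/-- The trajectory of `n` in the canonical system of `𝒜_F`:
`n_0 = n`, `n_{i+1} = f_i(n_i)`. -/
def trajFr (F : List ℚ) (n : ℤ) : ℕ → ℤ
  | 0 => n
  | i + 1 => fFr F i (trajFr F n i)

lemma bBase_ge_two (F : List ℚ) (hne : F ≠ []) (hpos : ∀ q ∈ F, 0 < q) :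
    2 ≤ bBase F := by
  have h1 : (1:ℤ) ≤ (F.map fun q => ⌈q⌉).foldr max 0 := by
    obtain ⟨q, tl, rfl⟩ := List.exists_cons_of_ne_nil hne
    simp only [List.map_cons, List.foldr_cons]
    have hq : (1:ℤ) ≤ ⌈q⌉ := by
      have := Int.ceil_pos.mpr (hpos q (List.mem_cons_self))
      omega
    exact le_trans hq (le_max_left _ _)
  unfold bBase
  omega

/-- In the canonical system of `𝒜_F`, every Fractran trajectory is reached: for any
positive integer `n`, with `L = ⌈log_b (n+1)⌉ + 1`, the trajectory starting from
`N = n · b^(L(L+1)/2) = n · ∏_{i=0}^{L-1} b_i` attains the value `n` at step `L`,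
and no earlier trajectory value hits the exceptional value `b_j - 1`. -/
theorem trajFr_reaches_fractran
    (F : List ℚ) (hne : F ≠ []) (hpos : ∀ q ∈ F, 0 < q)
    (n : ℕ) (hn : 0 < n)
    (L : ℕ) (hL : L = Nat.clog (bBase F).toNat (n + 1) + 1) :
    trajFr F ((n : ℤ) * bBase F ^ (L * (L + 1) / 2)) L = (n : ℤ) ∧
    ∀ j < L, trajFr F ((n : ℤ) * bBase F ^ (L * (L + 1) / 2)) j ≠ bF F j - 1 := by
  have hb : 2 ≤ bBase F := bBase_ge_two F hne hpos
  set b := bBase F with hbdef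
  have hbpos : (0:ℤ) < b := by omega
  have hsum0 : L * (L + 1) / 2 = ∑ i ∈ Finset.Ico 0 L, (i + 1) := by
    rw [← Finset.range_eq_Ico]
    have h2 : (∑ i ∈ Finset.range L, (i+1)) + 0 = ∑ i ∈ Finset.range (L+1), i :=
      (Finset.sum_range_succ' id L).symm
    rw [Finset.sum_range_id] at h2
    simp only [Nat.add_succ_sub_one, Nat.add_zero] at h2
    rw [h2, Nat.mul_comm L (L+1)]
  have hdig : ∀ j : ℕ, digitF F j 0 = 0 := by
    intro j
    unfold digitF
    rw [if_neg]
    · simp [fractranStep]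
    · have h1 : (1:ℤ) < b ^ (j+1) := one_lt_pow₀ (by omega) (Nat.succ_ne_zero j)
      have hbF : bF F j = b ^ (j+1) := rfl
      omega
  have key : ∀ j, j ≤ L →
      trajFr F ((n:ℤ) * b ^ (L*(L+1)/2)) j
        = (n:ℤ) * b ^ (∑ i ∈ Finset.Ico j L, (i+1)) := by
    intro j
    induction j with
    | zero => intro _; rw [hsum0]; rfl
    | succ j ih =>
      intro hj
      have hjL : j < L := hj
      have hprev := ih hjL.le
      have he : ∑ i ∈ Finset.Ico j L, (i+1) = (j+1) + ∑ i ∈ Finset.Ico (j+1) L, (i+1) :=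
        Finset.sum_eq_sum_Ico_succ_bot hjL _
      show fFr F j (trajFr F ((n:ℤ) * b ^ (L*(L+1)/2)) j) = _
      rw [hprev, he]
      set e := ∑ i ∈ Finset.Ico (j+1) L, (i+1) with hedef
      have hm : (n:ℤ) * b ^ ((j+1) + e) = ((n:ℤ) * b ^ e) * b ^ (j+1) := by ring
      rw [hm]
      unfold fFr
      have hbF : bF F j = b ^ (j+1) := rfl
      rw [hbF]
      have hmod : Int.emod ((n:ℤ) * b ^ e * b ^ (j+1)) (b ^ (j+1)) = 0 :=
        Int.mul_emod_left _ _
      rw [hmod, hdig j, sub_zero, add_zero,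
        Int.mul_ediv_cancel _ (ne_of_gt (pow_pos hbpos (j+1)))]
  constructor
  · have := key L le_rfl
    rwa [Finset.Ico_self, Finset.sum_empty, pow_zero, mul_one] at this
  · intro j hjL h
    rw [key j hjL.le] at h
    have he : ∑ i ∈ Finset.Ico j L, (i+1) = (j+1) + ∑ i ∈ Finset.Ico (j+1) L, (i+1) :=
      Finset.sum_eq_sum_Ico_succ_bot hjL _
    rw [he] at h
    have hdvd1 : b ∣ (n:ℤ) * b ^ ((j+1) + ∑ i ∈ Finset.Ico (j+1) L, (i+1)) :=
      ⟨(n:ℤ) * b ^ (j + ∑ i ∈ Finset.Ico (j+1) L, (i+1)), by ring⟩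
    have hdvd2 : b ∣ bF F j := ⟨b ^ j, by rw [show bF F j = b ^ (j+1) from rfl]; ring⟩
    have hone : b ∣ 1 := by
      have := Int.dvd_sub hdvd2 (h ▸ hdvd1)
      simpa using this
    have := Int.le_of_dvd one_pos hone
    omega
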